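/- The semigroup A presented by ⟨a, b | a*a*b = a⟩ contains no idempotent element, i.e., there is no e ∈ A with e*e = e. -/

import Mathlib

namespace Stmt1

/-- The generator `a` of the free semigroup on two generators. -/
def a : FreeSemigroup (Fin 2) := FreeSemigroup.of 0

/-- The generator `b` of the free semigroup on two generators. -/
def b : FreeSemigroup (Fin 2) := FreeSemigroup.of 1

/-- The defining relation `a * a * b = a`. -/
def rel : FreeSemigroup (Fin 2) → FreeSemigroup (Fin 2) → Prop :=
  fun x y => x = a * a * b ∧ y = a

/-- The semigroup `A = ⟨a, b ∣ a * a * b = a⟩`: the quotient of the free semigroup on two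
generators by the smallest congruence identifying `a * a * b` and `a`. -/
def A : Type := (conGen rel).Quotient

instance : Semigroup A := Con.semigroup _

/-! ### An invariant

To a word `w` we attach the triple `(t, M, c)` where `t` is the total weight
(`a ↦ 1`, `b ↦ -1`), `M` is the maximum over all nonempty suffixes of their
weights, and `c` is the number of nonempty suffixes attaining this maximum.
This triple is multiplicative for an explicit (tropical-flavoured) product `m`,
it is preserved by the relation `aab = a`, always has `c ≥ 1`, and no triple
with `c ≥ 1` is idempotent for `m`. -/

/-- Tropical-style product on invariant triples `(weight, max suffix weight, multiplicity)`. -/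
def m : ℤ × ℤ × ℤ → ℤ × ℤ × ℤ → ℤ × ℤ × ℤ :=
  fun x y =>
    (x.1 + y.1, max y.2.1 (y.1 + x.2.1),
      (if y.2.1 = max y.2.1 (y.1 + x.2.1) then y.2.2 else 0) +
        (if y.1 + x.2.1 = max y.2.1 (y.1 + x.2.1) then x.2.2 else 0))

lemma m_assoc (x y z : ℤ × ℤ × ℤ) : m (m x y) z = m x (m y z) := by
  obtain ⟨t1, M1, c1⟩ := x
  obtain ⟨t2, M2, c2⟩ := y
  obtain ⟨t3, M3, c3⟩ := z
  simp only [m, Prod.mk.injEq]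
  refine ⟨by ring, by omega, ?_⟩
  split_ifs <;> omega

/-- Invariant of a single generator. -/
def g : Fin 2 → ℤ × ℤ × ℤ := fun i => if i = 0 then (1, 1, 1) else (-1, -1, 1)

/-- Invariant of a nonempty word, given as head and tail. -/
def listPhi : Fin 2 → List (Fin 2) → ℤ × ℤ × ℤ
  | x, [] => g x
  | x, y :: l => m (g x) (listPhi y l)

/-- The invariant on the free semigroup. -/
def Phi : FreeSemigroup (Fin 2) → ℤ × ℤ × ℤ := fun w => listPhi w.1 w.2

lemma listPhi_append (x : Fin 2) (l : List (Fin 2)) (y : Fin 2) (l' : List (Fin 2)) :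
    listPhi x (l ++ y :: l') = m (listPhi x l) (listPhi y l') := by
  induction l generalizing x with
  | nil => rfl
  | cons z l ih =>
      show m (g x) (listPhi z (l ++ y :: l')) = m (m (g x) (listPhi z l)) (listPhi y l')
      rw [ih, ← m_assoc]

lemma Phi_mul (u v : FreeSemigroup (Fin 2)) : Phi (u * v) = m (Phi u) (Phi v) := by
  obtain ⟨x, l⟩ := u
  obtain ⟨y, l'⟩ := v
  exact listPhi_append x l y l'

lemma listPhi_pos (x : Fin 2) (l : List (Fin 2)) : 1 ≤ (listPhi x l).2.2 := by
  induction l generalizing x with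
  | nil =>
      fin_cases x <;> simp [listPhi, g]
  | cons y l ih =>
      have h1 : 1 ≤ (g x).2.2 := by fin_cases x <;> simp [g]
      have h2 := ih y
      simp only [listPhi, m]
      split_ifs <;> omega

lemma Phi_pos (u : FreeSemigroup (Fin 2)) : 1 ≤ (Phi u).2.2 := listPhi_pos u.1 u.2

/-- The congruence of having equal invariants. -/
def PhiCon : Con (FreeSemigroup (Fin 2)) where
  r x y := Phi x = Phi y
  iseqv := ⟨fun _ => rfl, Eq.symm, Eq.trans⟩
  mul' h1 h2 := show Phi _ = Phi _ by rw [Phi_mul, Phi_mul]; exact congrArg₂ m h1 h2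

lemma conGen_le_PhiCon : conGen rel ≤ PhiCon := by
  apply Con.conGen_le.mpr
  rintro x y ⟨rfl, rfl⟩
  show Phi (a * a * b) = Phi a
  decide

/-- The semigroup `A = ⟨a, b ∣ aab = a⟩` has no idempotent element. -/
theorem no_idempotent_in_A : ¬ ∃ e : A, e * e = e := by
  rintro ⟨e, he⟩
  obtain ⟨w, rfl⟩ := Quotient.exists_rep e
  have hq : ((w * w : FreeSemigroup (Fin 2)) : (conGen rel).Quotient) = (w : (conGen rel).Quotient) := he
  have hcon : (conGen rel) (w * w) w := (Con.eq _).mp hq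
  have hPhi : Phi (w * w) = Phi w := conGen_le_PhiCon hcon
  rw [Phi_mul] at hPhi
  have hpos := Phi_pos w
  simp only [m, Prod.ext_iff] at hPhi
  obtain ⟨h1, h2, h3⟩ := hPhi
  split_ifs at h3 <;> omega

end Stmt1
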